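/- arXiv:1608.03740 — 2 statements merged into one kernel-verified Lean document; each statement's English description precedes it below -/
import Mathlib

section
/- Let m, n, d, j be natural numbers with 0 < j ≤ d < min(m,n), c = m+n-2d-1, and let q_j(m,n,d) be the determinant of the d×d submatrix of the d×(d+1) matrix (C(c, m-i-k))_{1≤i≤d, 0≤k≤d} obtained by deleting its (j+1)-th column. Then q_j(m,n,d) = (C(d,j)·C(n-d+j-1, j) / C(m-1, j)) · q_0(m,n,d) in ℚ. -/
open Finset

/-- Binomial coefficient `C(c, k)` with integer lower index, zero when `k < 0`
(and automatically zero when `k > c`). -/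
def binomZ (c : ℕ) (k : ℤ) : ℤ := if 0 ≤ k then (c.choose k.toNat : ℤ) else 0

lemma binomZ_neg {c : ℕ} {k : ℤ} (h : k < 0) : binomZ c k = 0 := by
  simp [binomZ, not_le.mpr h]

lemma binomZ_natCast (c k : ℕ) : binomZ c (k : ℤ) = (c.choose k : ℤ) := by
  simp [binomZ]

lemma binomZ_big {c : ℕ} {k : ℤ} (h : (c : ℤ) < k) : binomZ c k = 0 := by
  rw [binomZ, if_pos (by omega)]
  simp [Nat.choose_eq_zero_of_lt (show c < k.toNat by omega)]

lemma binomZ_pascal (c : ℕ) (t : ℤ) :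
    binomZ (c + 1) t = binomZ c t + binomZ c (t - 1) := by
  rcases lt_trichotomy t 0 with h | h | h
  · rw [binomZ_neg h, binomZ_neg h, binomZ_neg (by omega)]; ring
  · subst h; simp [binomZ]
  · obtain ⟨s, rfl⟩ : ∃ s : ℕ, t = ((s + 1 : ℕ) : ℤ) := ⟨(t - 1).toNat, by omega⟩
    have h2 : (((s + 1 : ℕ) : ℤ) - 1) = (s : ℤ) := by push_cast; ring
    rw [h2, binomZ_natCast, binomZ_natCast, binomZ_natCast, Nat.choose_succ_succ]
    push_cast; ring

lemma binomZ_symm (c : ℕ) (t : ℤ) : binomZ c t = binomZ c ((c : ℤ) - t) := by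
  rcases lt_trichotomy t 0 with h | h | h
  · rw [binomZ_neg h, binomZ_big (by omega)]
  · subst h
    have := binomZ_natCast c c
    simp only [Nat.choose_self] at this
    simp [binomZ, this]
  · rcases le_or_gt t (c : ℤ) with h2 | h2
    · obtain ⟨s, rfl⟩ : ∃ s : ℕ, t = (s : ℤ) := ⟨t.toNat, by omega⟩
      have : ((c : ℤ) - s) = ((c - s : ℕ) : ℤ) := by omega
      rw [this, binomZ_natCast, binomZ_natCast, Nat.choose_symm (by omega)]
    · rw [binomZ_big h2, binomZ_neg (by omega)]

lemma base0 (d : ℕ) (a : ℤ) (h1 : 1 ≤ a) :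
    ∑ k ∈ range (d+1), (-1:ℤ)^k * binomZ 1 (a - k) =
      (if a = (d:ℤ)+1 then (-1:ℤ)^d else 0) := by
  induction d with
  | zero =>
    rw [Finset.sum_range_one]
    have hc : binomZ 1 ((1:ℕ):ℤ) = 1 := by rw [binomZ_natCast]; norm_num
    rcases eq_or_lt_of_le h1 with h | h
    · rw [if_pos (by omega)]
      have : a - ((0:ℕ):ℤ) = ((1:ℕ):ℤ) := by push_cast; omega
      rw [this, hc]; norm_num
    · rw [if_neg (by omega)]
      have : binomZ 1 (a - ((0:ℕ):ℤ)) = 0 := binomZ_big (by push_cast; omega)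
      rw [this]; ring
  | succ d ih =>
    rw [Finset.sum_range_succ, ih]
    rcases eq_or_ne a ((d:ℤ)+1) with h | h
    · rw [if_pos h, if_neg (by omega)]
      have : a - ((d:ℤ)+1) = ((0:ℕ):ℤ) := by omega
      rw [show a - ((d+1:ℕ):ℤ) = a - ((d:ℤ)+1) by push_cast; ring, this, binomZ_natCast]
      simp [pow_succ]
    · rw [if_neg h]
      rcases eq_or_ne a ((d:ℤ)+2) with h2 | h2
      · rw [if_pos (by push_cast; omega)]
        have : a - ((d+1:ℕ):ℤ) = ((1:ℕ):ℤ) := by push_cast; omega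
        rw [this, binomZ_natCast]
        norm_num
      · rw [if_neg (by push_cast; omega)]
        have : binomZ 1 (a - ((d+1:ℕ):ℤ)) = 0 := by
          rcases lt_or_ge (a - ((d+1:ℕ):ℤ)) 0 with h3 | h3
          · exact binomZ_neg h3
          · exact binomZ_big (by push_cast at h3 ⊢; omega)
        rw [this]; ring

def tS (N : ℕ) (a : ℤ) (k : ℕ) : ℤ := (-1)^k * ((N+k).choose k : ℤ) * binomZ (N+1) (a - k)
def uS (N : ℕ) (a : ℤ) (k : ℕ) : ℤ := (-1)^k * ((N+1+k).choose k : ℤ) * binomZ (N+1) (a - k)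
def vS (N : ℕ) (a : ℤ) (k : ℕ) : ℤ := (-1)^k * ((N+1+k).choose k : ℤ) * binomZ (N+1) (a - 1 - k)

lemma L0 (N d : ℕ) (a : ℤ) (h1 : 1 ≤ a) (h2 : a ≤ (d:ℤ)) :
    ∑ k ∈ range (d+1), tS N a k = 0 := by
  induction N generalizing a with
  | zero =>
    have h : ∀ k ∈ range (d+1), tS 0 a k = (-1:ℤ)^k * binomZ 1 (a - k) := by
      intro k _; rw [tS, Nat.zero_add, Nat.choose_self]; push_cast; ring
    rw [Finset.sum_congr rfl h, base0 d a h1, if_neg (by omega)]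
  | succ N ih =>
    have hsplit : ∀ k ∈ range (d+1), tS (N+1) a k = uS N a k + vS N a k := by
      intro k _
      rw [tS, uS, vS, show N+1+1 = (N+1)+1 from rfl, binomZ_pascal (N+1) (a - k),
        show a - (k:ℤ) - 1 = a - 1 - k from by ring]
      ring
    have hP : ∀ k ∈ range d, uS N a (k+1) = tS N a (k+1) - vS N a k := by
      intro k _
      rw [uS, tS, vS, show N+1+(k+1) = (N+1+k)+1 from by ring, Nat.choose_succ_succ (N+1+k) k,
        show (N+1+k).choose (k+1) = (N+(k+1)).choose (k+1) from by rw [show N+1+k = N+(k+1) from by ring],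
        show a - ((k+1:ℕ):ℤ) = a - 1 - (k:ℕ) from by push_cast; ring]
      push_cast; ring
    have h0 : uS N a 0 = tS N a 0 := by rw [uS, tS]; norm_num
    have hlast : vS N a d = 0 := by
      rw [vS, binomZ_neg (by omega)]; ring
    have e1 : ∑ k ∈ range (d+1), uS N a k
        = ∑ k ∈ range d, uS N a (k+1) + uS N a 0 := Finset.sum_range_succ' _ d
    have e2 : ∑ k ∈ range (d+1), tS N a k
        = ∑ k ∈ range d, tS N a (k+1) + tS N a 0 := Finset.sum_range_succ' _ d
    have e3 : ∑ k ∈ range (d+1), vS N a k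
        = ∑ k ∈ range d, vS N a k + vS N a d := Finset.sum_range_succ _ d
    have e4 : ∑ k ∈ range d, uS N a (k+1)
        = ∑ k ∈ range d, tS N a (k+1) - ∑ k ∈ range d, vS N a k := by
      rw [← Finset.sum_sub_distrib]
      exact Finset.sum_congr rfl hP
    have hih := ih a h1 h2
    rw [Finset.sum_congr rfl hsplit, Finset.sum_add_distrib]
    rw [e2] at hih
    linarith [e1, e3, e4, hih, h0, hlast]

def V (d e N c : ℕ) (a : ℤ) : ℤ :=
  ∑ k ∈ range (d+1), (-1:ℤ)^k * ((e + (d-k)).choose e : ℤ) * ((N+k).choose k : ℤ) * binomZ c (a - k)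

lemma V_c (d e N c : ℕ) (a : ℤ) : V d e N (c+1) a = V d e N c a + V d e N c (a-1) := by
  rw [V, V, V, ← Finset.sum_add_distrib]
  refine Finset.sum_congr rfl fun k _ => ?_
  rw [binomZ_pascal c (a - k), show a - (k:ℤ) - 1 = a - 1 - k from by ring]
  ring

lemma V_rec (D e N c : ℕ) (a : ℤ) :
    V (D+1) (e+1) N c a = V D (e+1) N c a + V (D+1) e N c a := by
  rw [V, V, V]
  rw [Finset.sum_range_succ, Finset.sum_range_succ (n := D+1)
    (f := fun k => (-1:ℤ)^k * ((e + (D+1-k)).choose e : ℤ) * ((N+k).choose k : ℤ) * binomZ c (a - k))]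
  have hlast : ((-1:ℤ)^(D+1) * (((e+1) + (D+1-(D+1))).choose (e+1) : ℤ) * ((N+(D+1)).choose (D+1) : ℤ) * binomZ c (a - (D+1:ℕ)))
      = (-1:ℤ)^(D+1) * ((e + (D+1-(D+1))).choose e : ℤ) * ((N+(D+1)).choose (D+1) : ℤ) * binomZ c (a - (D+1:ℕ)) := by
    simp
  rw [hlast]
  have hmain : ∑ k ∈ range (D+1), (-1:ℤ)^k * (((e+1) + (D+1-k)).choose (e+1) : ℤ) * ((N+k).choose k : ℤ) * binomZ c (a - k)
      = ∑ k ∈ range (D+1), (-1:ℤ)^k * (((e+1) + (D-k)).choose (e+1) : ℤ) * ((N+k).choose k : ℤ) * binomZ c (a - k)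
        + ∑ k ∈ range (D+1), (-1:ℤ)^k * ((e + (D+1-k)).choose e : ℤ) * ((N+k).choose k : ℤ) * binomZ c (a - k) := by
    rw [← Finset.sum_add_distrib]
    refine Finset.sum_congr rfl fun k hk => ?_
    have hkD : k ≤ D := by simpa using Nat.lt_succ_iff.mp (Finset.mem_range.mp hk)
    rw [show (e+1) + (D+1-k) = (e + (D+1-k)) + 1 from by omega,
      Nat.choose_succ_succ (e + (D+1-k)) e,
      show e + (D+1-k) = (e+1) + (D-k) from by omega]
    push_cast; ring
  rw [hmain]; ring

lemma neg_one_pow_sub {d k : ℕ} (h : k ≤ d) : ((-1:ℤ))^(d-k) = (-1)^d * (-1)^k := by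
  have h1 : ((-1:ℤ))^(d-k) * (-1)^k = (-1)^d := by
    rw [← pow_add]; congr 1; omega
  have h2 : ((-1:ℤ))^k * (-1)^k = 1 := by
    rw [← pow_add, ← two_mul, pow_mul]; norm_num
  calc ((-1:ℤ))^(d-k) = (-1)^(d-k) * ((-1)^k * (-1)^k) := by rw [h2, mul_one]
    _ = ((-1)^(d-k) * (-1)^k) * (-1)^k := by ring
    _ = (-1)^d * (-1)^k := by rw [h1]

lemma V_symm (d e N c : ℕ) (a : ℤ) :
    V d e N c a = (-1:ℤ)^d * V d N e c ((c:ℤ) + d - a) := by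
  rw [V, V, Finset.mul_sum]
  rw [← Finset.sum_range_reflect]
  refine Finset.sum_congr rfl fun k hk => ?_
  have hkd : k ≤ d := by
    have := Finset.mem_range.mp hk; omega
  rw [show d + 1 - 1 - k = d - k from by omega]
  have h1 : e + (d - (d-k)) = e + k := by omega
  have h3 : ((e+k).choose e : ℤ) = ((e+k).choose k : ℤ) := by rw [Nat.choose_symm_add]
  have h2 : ((N + (d-k)).choose (d-k) : ℤ) = ((N + (d-k)).choose N : ℤ) := by
    rw [← Nat.choose_symm_add]
  have h4 : binomZ c (a - ((d-k:ℕ):ℤ)) = binomZ c ((c:ℤ) + d - a - k) := by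
    rw [binomZ_symm c (a - ((d-k:ℕ):ℤ))]
    congr 1
    push_cast [Nat.cast_sub hkd]
    ring
  rw [h1, h3, h2, h4, neg_one_pow_sub hkd]
  ring

lemma V_one (e N : ℕ) : V 1 e N (e+N+1) ((e:ℤ)+1) = 0 := by
  rw [V, Finset.sum_range_succ, Finset.sum_range_one]
  have h0 : (e:ℤ) + 1 - (0:ℕ) = ((e+1:ℕ):ℤ) := by push_cast; ring
  have h1 : (e:ℤ) + 1 - (1:ℕ) = ((e:ℕ):ℤ) := by push_cast; ring
  rw [h0, h1, binomZ_natCast, binomZ_natCast]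
  simp only [Nat.sub_zero, Nat.sub_self, Nat.add_zero, Nat.choose_succ_self_right,
    Nat.choose_self, Nat.choose_zero_right, pow_zero, pow_one, Nat.choose_one_right]
  have key := Nat.choose_succ_right_eq (e+N+1) e
  have hsub : e + N + 1 - e = N + 1 := by omega
  rw [hsub] at key
  have key2 := congrArg (Nat.cast : ℕ → ℤ) key
  push_cast at key2 ⊢
  linarith

lemma Vmain : ∀ (d e N : ℕ) (a : ℤ), (e:ℤ) + 1 ≤ a → a ≤ (e:ℤ) + d → V d e N (e+N+1) a = 0 := by
  intro d
  induction d using Nat.strong_induction_on with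
  | _ d IH =>
    match d with
    | 0 => intro e N a h1 h2; exfalso; omega
    | 1 =>
      intro e N a h1 h2
      have : a = (e:ℤ) + 1 := by omega
      rw [this]; exact V_one e N
    | (D+2) =>
      -- the strict-window claim, by strong induction on e + N
      have hstrict : ∀ s : ℕ, ∀ e N : ℕ, e + N = s → ∀ a : ℤ, (e:ℤ)+1 ≤ a → a ≤ (e:ℤ) + (D+1) →
          V (D+2) e N (e+N+1) a = 0 := by
        intro s
        induction s using Nat.strong_induction_on with
        | _ s IHs =>
          intro e N hs a ha1 ha2
          match e with
          | 0 =>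
            have hcongr : ∀ k ∈ range (D+3),
                (-1:ℤ)^k * ((0 + (D+2-k)).choose 0 : ℤ) * ((N+k).choose k : ℤ) * binomZ (N+1) (a - k)
                  = tS N a k := by
              intro k _
              rw [Nat.choose_zero_right, tS]
              push_cast; ring
            rw [V, show 0+N+1 = N+1 from by omega, Finset.sum_congr rfl hcongr]
            exact L0 N (D+2) a (by omega) (by push_cast at ha2 ⊢; omega)
          | (e''+1) =>
            have hc : e''+1+N+1 = (e''+N+1)+1 := by omega
            rw [V_rec (D+1) e'' N (e''+1+N+1) a]
            have t1 : V (D+1) (e''+1) N (e''+1+N+1) a = 0 := by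
              apply IH (D+1) (by omega) (e''+1) N a (by push_cast; push_cast at ha1; omega)
                (by push_cast; push_cast at ha2; omega)
            have hVc := V_c (D+2) e'' N (e''+N+1) a
            have t3 : V (D+2) e'' N (e''+N+1) (a-1) = 0 := by
              apply IHs (e''+N) (by omega) e'' N rfl (a-1) (by push_cast at ha1 ⊢; omega)
                (by push_cast at ha2 ⊢; omega)
            have t2 : V (D+2) e'' N (e''+N+1) a = 0 := by
              rcases le_or_gt a ((e'':ℤ) + (D+1)) with hle | hgt
              · exact IHs (e''+N) (by omega) e'' N rfl a (by push_cast at ha1 ⊢; omega) hle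
              · -- a = e'' + D + 2 : top of window, use symmetry
                rw [V_symm]
                have harg : ((e''+N+1:ℕ):ℤ) + ((D+2:ℕ):ℤ) - a = (N:ℤ) + 1 := by
                  push_cast; push_cast at ha2 hgt; omega
                rw [harg]
                have := IHs (N+e'') (by omega) N e'' rfl ((N:ℤ)+1) (by omega)
                  (by push_cast; omega)
                rw [show N+e''+1 = e''+N+1 from by omega] at this
                rw [this, mul_zero]
            have t2top : V (D+2) e'' N (e''+1+N+1) a = 0 := by
              rw [hc, hVc, t2, t3]; norm_num
            have final : V (D+1) (e''+1) N (e''+1+N+1) a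
                + V (D+2) e'' N (e''+1+N+1) a = 0 := by
              rw [t1, t2top]; norm_num
            exact final
      intro e N a h1 h2
      rcases le_or_gt a ((e:ℤ) + (D+1)) with hle | hgt
      · exact hstrict (e+N) e N rfl a h1 hle
      · rw [V_symm]
        have harg : ((e+N+1:ℕ):ℤ) + ((D+2:ℕ):ℤ) - a = (N:ℤ) + 1 := by
          push_cast; push_cast at h2 hgt; omega
        rw [harg]
        have := hstrict (N+e) N e rfl ((N:ℤ)+1) (by omega) (by push_cast; omega)
        rw [show N+e+1 = e+N+1 from by omega] at this
        rw [this, mul_zero]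

/-- The `d × (d+1)` binomial Hankel matrix `H(m,n,d)` with entries
`C(m+n-2d-1, m-i-j)` for `1 ≤ i ≤ d`, `0 ≤ j ≤ d`. -/
def hankelH (m n d : ℕ) : Matrix (Fin d) (Fin (d + 1)) ℤ :=
  Matrix.of fun i j => binomZ (m + n - 2 * d - 1) ((m : ℤ) - ((i : ℕ) + 1) - (j : ℕ))

/-- `q_j(m,n,d)`: the maximal minor of `H(m,n,d)` obtained by deleting the
`(j+1)`-th column (columns are indexed `0,…,d`). -/
def qMinor (m n d : ℕ) (j : Fin (d + 1)) : ℤ :=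
  ((hankelH m n d).submatrix id j.succAbove).det

lemma kernel (m n d : ℕ) (hdm : d < m) (hdn : d < n) (i : Fin d) :
    ∑ k ∈ range (d+1), (-1:ℤ)^k * ((m-1-k).choose (d-k) : ℤ) * ((n-d-1+k).choose k : ℤ)
      * binomZ (m+n-2*d-1) ((m:ℤ) - ((i:ℕ)+1) - k) = 0 := by
  have h := Vmain d (m-1-d) (n-d-1) ((m:ℤ) - ((i:ℕ)+1))
    (by have := i.isLt; push_cast; omega) (by push_cast; omega)
  rw [V, show m-1-d + (n-d-1) + 1 = m+n-2*d-1 from by omega] at h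
  rw [← h]
  refine Finset.sum_congr rfl fun k hk => ?_
  have hkd : k ≤ d := by have := Finset.mem_range.mp hk; omega
  have h1 : m-1-d + (d-k) = m-1-k := by omega
  have h2 : (m-1-k).choose (m-1-d) = (m-1-k).choose (d-k) := by
    rw [← Nat.choose_symm (show d-k ≤ m-1-k from by omega),
      show m-1-k-(d-k) = m-1-d from by omega]
  rw [h1, h2]

lemma det_updateRow_finset_sum {R : Type*} [CommRing R] {d : ℕ}
    (M : Matrix (Fin d) (Fin d) R) (r : Fin d) {ι : Type*} [DecidableEq ι] (s : Finset ι)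
    (f : ι → Fin d → R) :
    (M.updateRow r (∑ k ∈ s, f k)).det = ∑ k ∈ s, (M.updateRow r (f k)).det := by
  induction s using Finset.induction_on with
  | empty =>
    rw [Finset.sum_empty, Finset.sum_empty]
    exact Matrix.det_eq_zero_of_row_eq_zero r (by simp)
  | @insert a s ha ih =>
    rw [Finset.sum_insert ha, Finset.sum_insert ha, Matrix.det_updateRow_add, ih]

def Aq (m n d : ℕ) : Matrix (Fin (d+1)) (Fin d) ℚ :=
  Matrix.transpose ((hankelH m n d).map (fun x : ℤ => (x : ℚ)))

def wq (m n d : ℕ) : Fin (d+1) → ℚ := fun k =>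
  (((-1:ℤ)^(k:ℕ) * ((m-1-(k:ℕ)).choose (d-(k:ℕ)) : ℤ) * ((n-d-1+(k:ℕ)).choose (k:ℕ) : ℤ) : ℤ) : ℚ)

lemma hker (m n d : ℕ) (hdm : d < m) (hdn : d < n) (i : Fin d) :
    ∑ k : Fin (d+1), wq m n d k * Aq m n d k i = 0 := by
  have h := kernel m n d hdm hdn i
  have h2 := congrArg (fun z : ℤ => (z : ℚ)) h
  push_cast at h2
  rw [← Fin.sum_univ_eq_sum_range (fun k =>
    ((-1:ℚ))^k * ((m-1-k).choose (d-k) : ℚ) * ((n-d-1+k).choose k : ℚ)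
      * ((binomZ (m+n-2*d-1) ((m:ℤ) - ((i:ℕ)+1) - k) : ℤ) : ℚ)) (d+1)] at h2
  rw [← h2]
  refine Finset.sum_congr rfl fun k _ => ?_
  have hA : Aq m n d k i = ((binomZ (m+n-2*d-1) ((m:ℤ) - ((i:ℕ)+1) - (k:ℕ)) : ℤ) : ℚ) := rfl
  rw [hA, wq]
  push_cast
  ring

lemma qratio (m n d' j' : ℕ) (hjd : j' + 1 ≤ d' + 1) (hdm : d' + 1 < m) (hdn : d' + 1 < n) :
    (wq m n (d'+1) 0) *
      Matrix.det ((Aq m n (d'+1)).submatrix (Fin.succAbove ⟨j'+1, by omega⟩) id)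
    = (-1:ℚ)^(j'+1) * (wq m n (d'+1) ⟨j'+1, by omega⟩)
        * Matrix.det ((Aq m n (d'+1)).submatrix (Fin.succAbove 0) id) := by
  set d := d' + 1 with hd
  set A := Aq m n d with hA
  set jF : Fin (d+1) := ⟨j'+1, by omega⟩ with hjF
  set M : Matrix (Fin d) (Fin d) ℚ := A.submatrix jF.succAbove id with hM
  set M0 : Matrix (Fin d) (Fin d) ℚ := A.submatrix (Fin.succAbove 0) id with hM0
  have hjF0 : jF ≠ 0 := by
    intro h
    have := congrArg Fin.val h
    simp [hjF] at this
  have hsA0 : jF.succAbove 0 = 0 := by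
    rw [Fin.succAbove_of_castSucc_lt]
    · rfl
    · rw [Fin.lt_def]; simp [hjF]
  have hMrow0 : M 0 = A 0 := by rw [hM]; show A (jF.succAbove 0) = A 0; rw [hsA0]
  -- kernel relation, function form
  have hker0 : wq m n d 0 • A 0 = ∑ k ∈ (Finset.univ.erase (0 : Fin (d+1))), (-(wq m n d k)) • A k := by
    funext i
    have h := hker m n d (by omega) (by omega) i
    rw [← Finset.sum_erase_add _ _ (Finset.mem_univ (0 : Fin (d+1))), ← hA] at h
    simp only [Finset.sum_apply, Pi.smul_apply, smul_eq_mul, neg_mul]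
    rw [Finset.sum_neg_distrib]
    linarith [h]
  -- expand
  have hstep1 : wq m n d 0 * M.det = ∑ k ∈ (Finset.univ.erase (0 : Fin (d+1))),
      (-(wq m n d k)) * (M.updateRow 0 (A k)).det := by
    calc wq m n d 0 * M.det
        = (M.updateRow 0 (wq m n d 0 • A 0)).det := by
          rw [Matrix.det_updateRow_smul, ← hMrow0, Matrix.updateRow_eq_self]
      _ = (M.updateRow 0 (∑ k ∈ (Finset.univ.erase (0 : Fin (d+1))), (-(wq m n d k)) • A k)).det := by
          rw [hker0]
      _ = ∑ k ∈ (Finset.univ.erase (0 : Fin (d+1))), (M.updateRow 0 ((-(wq m n d k)) • A k)).det :=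
          det_updateRow_finset_sum M 0 _ _
      _ = ∑ k ∈ (Finset.univ.erase (0 : Fin (d+1))), (-(wq m n d k)) * (M.updateRow 0 (A k)).det := by
          refine Finset.sum_congr rfl fun k _ => ?_
          rw [Matrix.det_updateRow_smul]
  have hvanish : ∀ k ∈ (Finset.univ.erase (0 : Fin (d+1))), k ≠ jF →
      (-(wq m n d k)) * (M.updateRow 0 (A k)).det = 0 := by
    intro k hk hkj
    obtain ⟨l, hl⟩ := Fin.exists_succAbove_eq hkj
    have hl0 : l ≠ 0 := by
      intro h
      rw [h, hsA0] at hl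
      exact (Finset.mem_erase.mp hk).1 hl.symm
    have : (M.updateRow 0 (A k)).det = 0 := by
      refine Matrix.det_zero_of_row_eq (Ne.symm hl0) ?_
      rw [Matrix.updateRow_self, Matrix.updateRow_ne hl0]
      show A k = A (jF.succAbove l)
      rw [hl]
    rw [this, mul_zero]
  have hred : wq m n d 0 * M.det = (-(wq m n d jF)) * (M.updateRow 0 (A jF)).det := by
    rw [hstep1]
    exact Finset.sum_eq_single_of_mem jF
      (Finset.mem_erase.mpr ⟨hjF0, Finset.mem_univ _⟩) hvanish
  -- permutation step
  set jd : Fin d := ⟨j', by omega⟩ with hjd2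
  set σ : Equiv.Perm (Fin d) := (jd.cycleRange)⁻¹ with hσ
  have hτ : ∀ x : Fin d,
      (if jd.cycleRange x = 0 then jF else jF.succAbove (jd.cycleRange x)) = x.succ := by
    intro x
    rcases lt_trichotomy (x : ℕ) j' with hx | hx | hx
    · have hcr : jd.cycleRange x = x + 1 := Fin.cycleRange_of_lt (by rw [Fin.lt_def]; simpa [hjd2])
      have hval : ((x + 1 : Fin d) : ℕ) = (x : ℕ) + 1 :=
        Fin.val_add_one_of_lt (by rw [Fin.lt_def, Fin.val_last]; omega)
      rw [hcr, if_neg (by intro h; have := congrArg Fin.val h; rw [hval] at this; simp at this)]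
      rw [Fin.succAbove_of_castSucc_lt _ _ (by rw [Fin.lt_def, Fin.coe_castSucc, hval]; show _ < j'+1; omega)]
      apply Fin.ext
      rw [Fin.coe_castSucc, hval, Fin.val_succ]
    · have hxx : x = jd := by apply Fin.ext; simpa [hjd2]
      rw [hxx, Fin.cycleRange_self, if_pos rfl]
      apply Fin.ext
      rw [Fin.val_succ]
    · have hcr : jd.cycleRange x = x := Fin.cycleRange_of_gt (by rw [Fin.lt_def]; simpa [hjd2])
      have hx0 : x ≠ 0 := by
        intro h
        rw [h] at hx
        simp at hx
      rw [hcr, if_neg hx0]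
      rw [Fin.succAbove_of_le_castSucc _ _ (by rw [Fin.le_def, Fin.coe_castSucc]; show j'+1 ≤ _; omega)]
  have hτ2 : ∀ l : Fin d, (if l = 0 then jF else jF.succAbove l) = (σ l).succ := by
    intro l
    have h1 := hτ (σ l)
    rwa [hσ, Equiv.Perm.inv_def, Equiv.apply_symm_apply] at h1
  have hNM0 : M.updateRow 0 (A jF) = M0.submatrix σ id := by
    ext l i
    rcases eq_or_ne l 0 with rfl | hl0
    · rw [Matrix.updateRow_self]
      show A jF i = M0 (σ 0) i
      rw [hM0]
      show A jF i = A ((0 : Fin (d+1)).succAbove (σ 0)) i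
      congr 1
      rw [Fin.zero_succAbove]
      have := hτ2 0
      rwa [if_pos rfl] at this
    · rw [Matrix.updateRow_ne hl0]
      show A (jF.succAbove l) i = A ((0 : Fin (d+1)).succAbove (σ l)) i
      congr 1
      rw [Fin.zero_succAbove]
      have := hτ2 l
      rwa [if_neg hl0] at this
  have hdet2 : (M.updateRow 0 (A jF)).det = (-1:ℚ)^j' * M0.det := by
    rw [hNM0, Matrix.det_permute σ M0]
    have hsign : Equiv.Perm.sign σ = (-1 : ℤˣ)^j' := by
      rw [hσ, Equiv.Perm.sign_inv, Fin.sign_cycleRange, hjd2]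
    rw [hsign]
    push_cast
    ring
  rw [hred, hdet2, pow_succ]
  ring

/-- `q_j(m,n,d)` in terms of `q_0(m,n,d)`. -/
theorem q_j_eval (m n d j : ℕ) (hj : 0 < j) (hjd : j ≤ d) (hdm : d < m) (hdn : d < n) :
    ((qMinor m n d ⟨j, Nat.lt_succ_of_le hjd⟩ : ℤ) : ℚ) =
      ((d.choose j : ℚ) * ((n - d + j - 1).choose j : ℚ) / ((m - 1).choose j : ℚ)) *
        ((qMinor m n d 0 : ℤ) : ℚ) := by
  obtain ⟨d', rfl⟩ : ∃ d', d = d' + 1 := ⟨d - 1, by omega⟩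
  obtain ⟨j', rfl⟩ : ∃ j', j = j' + 1 := ⟨j - 1, by omega⟩
  have hcast : ∀ (g : Fin (d'+2)), ((qMinor m n (d'+1) g : ℤ) : ℚ)
      = Matrix.det ((Aq m n (d'+1)).submatrix g.succAbove id) := by
    intro g
    have h := RingHom.map_det (Int.castRingHom ℚ) ((hankelH m n (d'+1)).submatrix id g.succAbove)
    rw [RingHom.mapMatrix_apply, ← Matrix.submatrix_map] at h
    have h2 : Matrix.det ((Aq m n (d'+1)).submatrix g.succAbove id)
        = Matrix.det ((((hankelH m n (d'+1)).map (fun x : ℤ => (x:ℚ))).submatrix id g.succAbove)) := by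
      rw [← Matrix.det_transpose ((((hankelH m n (d'+1)).map (fun x : ℤ => (x:ℚ))).submatrix id g.succAbove))]
      rw [Matrix.transpose_submatrix]
      rfl
    rw [qMinor, h2]
    exact h
  have hq1 := hcast ⟨j'+1, Nat.lt_succ_of_le hjd⟩
  have hq0 := hcast 0
  have hr : wq m n (d'+1) 0 *
      Matrix.det ((Aq m n (d'+1)).submatrix (Fin.succAbove ⟨j'+1, Nat.lt_succ_of_le hjd⟩) id)
    = (-1:ℚ)^(j'+1) * (wq m n (d'+1) ⟨j'+1, Nat.lt_succ_of_le hjd⟩)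
        * Matrix.det ((Aq m n (d'+1)).submatrix (Fin.succAbove 0) id) :=
    qratio m n d' j' hjd hdm hdn
  rw [hq1, hq0]
  set DM : ℚ := Matrix.det ((Aq m n (d'+1)).submatrix (Fin.succAbove ⟨j'+1, Nat.lt_succ_of_le hjd⟩) id) with hDM
  set DM0 : ℚ := Matrix.det ((Aq m n (d'+1)).submatrix (Fin.succAbove 0) id) with hDM0
  have hw0 : wq m n (d'+1) 0 = ((m-1).choose (d'+1) : ℚ) := by
    simp [wq]
  have hwj : wq m n (d'+1) ⟨j'+1, Nat.lt_succ_of_le hjd⟩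
      = (-1:ℚ)^(j'+1) * ((m-1-(j'+1)).choose ((d'+1)-(j'+1)) : ℚ)
        * ((n-(d'+1)-1+(j'+1)).choose (j'+1) : ℚ) := by
    rw [wq]
    push_cast
    ring
  have hw0ne : ((m-1).choose (d'+1) : ℚ) ≠ 0 :=
    Nat.cast_ne_zero.mpr (Nat.choose_pos (by omega)).ne'
  have hmne : ((m-1).choose (j'+1) : ℚ) ≠ 0 :=
    Nat.cast_ne_zero.mpr (Nat.choose_pos (by omega)).ne'
  have hch := Nat.choose_mul (n := m-1) (show j'+1 ≤ d'+1 by omega)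
  have hchQ := congrArg (Nat.cast : ℕ → ℚ) hch
  push_cast at hchQ
  have hnn : n - (d'+1) + (j'+1) - 1 = n - (d'+1) - 1 + (j'+1) := by omega
  rw [hnn]
  rw [hw0, hwj] at hr
  rw [show d'+1-(j'+1) = d'-j' from by omega] at hr
  have hsq : ((-1:ℚ))^(j'+1) * (-1)^(j'+1) = 1 := by
    rw [← mul_pow]; norm_num
  apply mul_left_cancel₀ hw0ne
  rw [hr]
  rw [div_mul_eq_mul_div, ← mul_div_assoc, eq_div_iff hmne]
  linear_combination ((m-1-(j'+1)).choose (d'-j') : ℚ)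
      * ((n-(d'+1)-1+(j'+1)).choose (j'+1) : ℚ) * DM0 * ((m-1).choose (j'+1) : ℚ) * hsq
    - ((n-(d'+1)-1+(j'+1)).choose (j'+1) : ℚ) * DM0 * hchQ
end

section
/- Let m, n, d be natural numbers with 0 < d < min(m,n), c = m+n-2d-1, and define k_j = C(d,j)·C(n-d+j-1,j)/C(m-1,j) for 0 ≤ j ≤ d. Then the vector (k_0, -k_1, k_2, ..., (-1)^d k_d) ∈ ℚ^(d+1) lies in the kernel of the d×(d+1) matrix with entries C(c, m-i-j) for 1 ≤ i ≤ d, 0 ≤ j ≤ d, i.e., ∑_{j=0}^{d} (-1)^j C(c, m-j-i) k_j = 0 for all 1 ≤ i ≤ d. -/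
open Finset

/-- Binomial coefficient `C(c, k)` with integer lower index, zero when `k < 0`
(and automatically zero when `k > c`), as a rational number. -/
def binomQ (c : ℕ) (k : ℤ) : ℚ := if 0 ≤ k then (c.choose k.toNat : ℚ) else 0

lemma binomQ_neg (c : ℕ) {k : ℤ} (h : k < 0) : binomQ c k = 0 := by
  simp [binomQ, not_le.mpr h]

lemma binomQ_succ (c : ℕ) (k : ℤ) : binomQ (c + 1) k = binomQ c k + binomQ c (k - 1) := by
  unfold binomQ
  rcases lt_or_ge k 0 with h | h
  · rw [if_neg (by omega), if_neg (by omega), if_neg (by omega)]; ring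
  rcases eq_or_lt_of_le h with rfl | h1
  · rw [if_pos le_rfl, if_pos le_rfl, if_neg (by omega)]; simp
  · have hk : k.toNat = (k - 1).toNat + 1 := by omega
    rw [if_pos h, if_pos h, if_pos (by omega), hk, Nat.choose_succ_succ']
    push_cast; ring

lemma binomQ_symm (c : ℕ) (k : ℤ) : binomQ c ((c : ℤ) - k) = binomQ c k := by
  unfold binomQ
  rcases lt_or_ge k 0 with h | h
  · rw [if_pos (by omega : (0:ℤ) ≤ (c:ℤ) - k), if_neg (by omega),
      Nat.choose_eq_zero_of_lt (by omega)]
    simp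
  rcases lt_or_ge (c : ℤ) k with h2 | h2
  · rw [if_neg (by omega), if_pos h, Nat.choose_eq_zero_of_lt (by omega)]
    simp
  · rw [if_pos (by omega), if_pos h]
    congr 1
    rw [show ((c : ℤ) - k).toNat = c - k.toNat by omega, Nat.choose_symm (by omega)]

/-- `∑ (-1)^j C(N+j,j) C(N+1, s-j)` (a Vandermonde-type sum). -/
def Vq (K N : ℕ) (s : ℤ) : ℚ :=
  ∑ j ∈ range K, (-1) ^ j * ((N + j).choose j : ℚ) * binomQ (N + 1) (s - j)

def Uq (K N : ℕ) (s : ℤ) : ℚ :=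
  ∑ j ∈ range K, (-1) ^ j * ((N + j).choose j : ℚ) * binomQ N (s - j)

lemma Vq_eq_Uq (K N : ℕ) (s : ℤ) : Vq K N s = Uq K N s + Uq K N (s - 1) := by
  rw [Vq, Uq, Uq, ← Finset.sum_add_distrib]
  refine Finset.sum_congr rfl fun j hj => ?_
  rw [binomQ_succ, show s - 1 - (j:ℤ) = s - j - 1 by ring]
  ring

lemma Uq_rec (K M : ℕ) (s : ℤ) (hs : s ≤ K) :
    Uq (K + 1) (M + 1) s + Uq (K + 1) (M + 1) (s - 1) = Vq (K + 1) M s := by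
  have hU' : Uq (K + 1) (M + 1) (s - 1)
      = ∑ j ∈ range K, (-1) ^ j * ((M + 1 + j).choose j : ℚ) * binomQ (M + 1) (s - 1 - j) := by
    rw [Uq, Finset.sum_range_succ,
      binomQ_neg (M + 1) (show s - 1 - (K:ℤ) < 0 by omega), mul_zero, add_zero]
  have hU : Uq (K + 1) (M + 1) s
      = (∑ j ∈ range K,
          ((-((-1) ^ j * ((M + 1 + j).choose j : ℚ) * binomQ (M + 1) (s - 1 - j)))
            + (-((-1) ^ j * ((M + (j + 1)).choose (j + 1) : ℚ) * binomQ (M + 1) (s - 1 - j)))))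
        + binomQ (M + 1) s := by
    rw [Uq, Finset.sum_range_succ']
    congr 1
    · refine Finset.sum_congr rfl fun j hj => ?_
      rw [show M + 1 + (j + 1) = (M + 1 + j) + 1 by omega, Nat.choose_succ_succ']
      rw [show s - ((j:ℕ) + 1 : ℕ) = s - 1 - (j:ℤ) by push_cast; ring]
      rw [show M + (j + 1) = M + 1 + j by omega]
      push_cast
      ring
    · simp
  have hV : Vq (K + 1) M s
      = (∑ j ∈ range K,
          -((-1) ^ j * ((M + (j + 1)).choose (j + 1) : ℚ) * binomQ (M + 1) (s - 1 - j)))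
        + binomQ (M + 1) s := by
    rw [Vq, Finset.sum_range_succ']
    congr 1
    · refine Finset.sum_congr rfl fun j hj => ?_
      rw [show s - ((j:ℕ) + 1 : ℕ) = s - 1 - (j:ℤ) by push_cast; ring]
      ring
    · simp
  rw [hU, hU', hV, Finset.sum_add_distrib]
  simp only [Finset.sum_neg_distrib]
  ring

lemma Vq_base (K : ℕ) (s : ℤ) (h1 : 1 ≤ s) (h2 : s < K + 1) : Vq (K + 1) 0 s = 0 := by
  have ht : ∀ j ∈ range (K + 1), (-1:ℚ) ^ j * ((0 + j).choose j : ℚ) * binomQ 1 (s - j)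
      = (if j = s.toNat then (-1:ℚ) ^ j else 0)
        + (if j = (s - 1).toNat then (-1:ℚ) ^ j else 0) := by
    intro j hj
    rw [Nat.zero_add, Nat.choose_self]
    rcases eq_or_ne (j : ℤ) s with hj1 | hj1
    · have e1 : binomQ 1 (s - j) = 1 := by rw [← hj1]; simp [binomQ]
      rw [e1, if_pos (by omega), if_neg (by omega)]; ring
    rcases eq_or_ne (j : ℤ) (s - 1) with hj2 | hj2
    · have e1 : binomQ 1 (s - j) = 1 := by
        rw [show s - (j:ℤ) = 1 by omega]; simp [binomQ]
      rw [e1, if_neg (by omega), if_pos (by omega)]; ring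
    · have e1 : binomQ 1 (s - j) = 0 := by
        rcases lt_or_ge (s - (j:ℤ)) 0 with h | h
        · exact binomQ_neg _ h
        · rw [binomQ, if_pos h, Nat.choose_eq_zero_of_lt (by omega)]; simp
      rw [e1, if_neg (by omega), if_neg (by omega)]; ring
  rw [Vq, Finset.sum_congr rfl ht, Finset.sum_add_distrib,
    Finset.sum_ite_eq' (range (K + 1)) s.toNat, Finset.sum_ite_eq' (range (K + 1)) (s - 1).toNat,
    if_pos (by simp; omega), if_pos (by simp; omega),
    show s.toNat = (s - 1).toNat + 1 by omega, pow_succ]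
  ring

lemma Vq_zero (K N : ℕ) (s : ℤ) (h1 : 1 ≤ s) (h2 : s < K + 1) : Vq (K + 1) N s = 0 := by
  induction N with
  | zero => exact Vq_base K s h1 h2
  | succ M ih =>
      rw [Vq_eq_Uq, Uq_rec K M s (by omega)]
      exact ih

/-- The alternating Hankel kernel sum, cleared of denominators. -/
def Sq (d m n : ℕ) (s : ℤ) : ℚ :=
  ∑ j ∈ range (d + 1),
    (-1) ^ j * ((m - 1 - j).choose (d - j) : ℚ) * ((n - d - 1 + j).choose j : ℚ) *
      binomQ (m + n - 2 * d - 1) (s - j)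

lemma Sq_symm (d m n : ℕ) (hm : d + 1 ≤ m) (hn : d + 1 ≤ n) (s : ℤ) :
    Sq d m n s = (-1) ^ d * Sq d n m ((m : ℤ) + n - d - 1 - s) := by
  rw [Sq, Sq, ← Finset.sum_range_reflect, Finset.mul_sum]
  refine Finset.sum_congr rfl fun j hj => ?_
  simp only [mem_range] at hj
  rw [show d + 1 - 1 - j = d - j from by omega]
  have e1 : m - 1 - (d - j) = m - d - 1 + j := by omega
  have e2 : d - (d - j) = j := by omega
  have e3 : n - d - 1 + (d - j) = n - 1 - j := by omega
  have e4 : n + m - 2 * d - 1 = m + n - 2 * d - 1 := by omega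
  have e5 : s - ((d - j : ℕ) : ℤ)
      = ((m + n - 2 * d - 1 : ℕ) : ℤ) - ((m : ℤ) + n - d - 1 - s - j) := by omega
  rw [e1, e2, e3, e4, e5, binomQ_symm]
  have h2 : (-1:ℚ) ^ j * (-1) ^ j = 1 := by
    rw [← pow_add]; exact Even.neg_one_pow ⟨j, rfl⟩
  have hpow : (-1:ℚ) ^ (d - j) = (-1) ^ d * (-1) ^ j := by
    have h1 : (-1:ℚ) ^ (d - j) * (-1) ^ j = (-1) ^ d := by
      rw [← pow_add]; congr 1; omega
    calc (-1:ℚ) ^ (d - j) = (-1) ^ (d - j) * ((-1) ^ j * (-1) ^ j) := by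
          rw [h2, mul_one]
      _ = (-1) ^ d * (-1) ^ j := by rw [← mul_assoc, h1]
  rw [hpow]
  ring

lemma Sq_rec (d m n : ℕ) (hm : d + 2 ≤ m) (hn : d + 2 ≤ n) (s : ℤ) :
    Sq d m n s = Sq d m (n - 1) s + Sq d (m - 1) n (s - 1) := by
  set c' := m + n - 2 * d - 2 with hc'
  have h1 : Sq d m n s
      = (∑ j ∈ range (d + 1), (-1) ^ j * ((m - 1 - j).choose (d - j) : ℚ) *
            ((n - d - 1 + j).choose j : ℚ) * binomQ c' (s - j))
        + (∑ j ∈ range (d + 1), (-1) ^ j * ((m - 1 - j).choose (d - j) : ℚ) *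
            ((n - d - 1 + j).choose j : ℚ) * binomQ c' (s - 1 - j)) := by
    rw [Sq, ← Finset.sum_add_distrib]
    refine Finset.sum_congr rfl fun j hj => ?_
    rw [show m + n - 2 * d - 1 = c' + 1 from by omega, binomQ_succ,
      show s - (j:ℤ) - 1 = s - 1 - j by ring]
    ring
  have hT1 : (∑ j ∈ range (d + 1), (-1) ^ j * ((m - 1 - j).choose (d - j) : ℚ) *
        ((n - d - 1 + j).choose j : ℚ) * binomQ c' (s - j))
      = Sq d m (n - 1) s
        + ∑ j ∈ range d, (-1) ^ (j + 1) * ((m - 1 - (j + 1)).choose (d - (j + 1)) : ℚ) *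
            ((n - d - 1 + j).choose j : ℚ) * binomQ c' (s - 1 - j) := by
    rw [Sq, show m + (n - 1) - 2 * d - 1 = c' from by omega,
      Finset.sum_range_succ' _ d, Finset.sum_range_succ' _ d]
    have key : ∀ j ∈ range d,
        (-1:ℚ) ^ (j + 1) * ((m - 1 - (j + 1)).choose (d - (j + 1)) : ℚ) *
            ((n - d - 1 + (j + 1)).choose (j + 1) : ℚ) * binomQ c' (s - ((j:ℕ) + 1 : ℕ))
        = ((-1) ^ (j + 1) * ((m - 1 - (j + 1)).choose (d - (j + 1)) : ℚ) *
            ((n - 1 - d - 1 + (j + 1)).choose (j + 1) : ℚ) * binomQ c' (s - ((j:ℕ) + 1 : ℕ)))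
          + ((-1) ^ (j + 1) * ((m - 1 - (j + 1)).choose (d - (j + 1)) : ℚ) *
            ((n - d - 1 + j).choose j : ℚ) * binomQ c' (s - 1 - j)) := by
      intro j hj
      rw [show n - d - 1 + (j + 1) = (n - d - 1 + j) + 1 from by omega,
        Nat.choose_succ_succ' (n - d - 1 + j) j,
        show n - 1 - d - 1 + (j + 1) = n - d - 1 + j from by omega,
        show s - (((j:ℕ) + 1 : ℕ) : ℤ) = s - 1 - j from by push_cast; ring]
      push_cast
      ring
    rw [Finset.sum_congr rfl key, Finset.sum_add_distrib]
    simp only [Nat.choose_zero_right]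
    ring
  have hT2 : (∑ j ∈ range (d + 1), (-1) ^ j * ((m - 1 - j).choose (d - j) : ℚ) *
        ((n - d - 1 + j).choose j : ℚ) * binomQ c' (s - 1 - j))
      = Sq d (m - 1) n (s - 1)
        + ∑ j ∈ range d, (-1) ^ j * ((m - 2 - j).choose (d - 1 - j) : ℚ) *
            ((n - d - 1 + j).choose j : ℚ) * binomQ c' (s - 1 - j) := by
    rw [Sq, show m - 1 + n - 2 * d - 1 = c' from by omega,
      Finset.sum_range_succ _ d, Finset.sum_range_succ _ d]
    have key : ∀ j ∈ range d,
        (-1:ℚ) ^ j * ((m - 1 - j).choose (d - j) : ℚ) *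
            ((n - d - 1 + j).choose j : ℚ) * binomQ c' (s - 1 - j)
        = ((-1) ^ j * ((m - 1 - 1 - j).choose (d - j) : ℚ) *
            ((n - d - 1 + j).choose j : ℚ) * binomQ c' (s - 1 - (j:ℤ)))
          + ((-1) ^ j * ((m - 2 - j).choose (d - 1 - j) : ℚ) *
            ((n - d - 1 + j).choose j : ℚ) * binomQ c' (s - 1 - j)) := by
      intro j hj
      simp only [mem_range] at hj
      rw [show m - 1 - j = (m - 2 - j) + 1 from by omega,
        show d - j = (d - 1 - j) + 1 from by omega,
        Nat.choose_succ_succ' (m - 2 - j) (d - 1 - j),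
        show m - 1 - 1 - j = m - 2 - j from by omega]
      push_cast
      ring
    rw [Finset.sum_congr rfl key, Finset.sum_add_distrib]
    rw [show m - 1 - 1 - d = m - 2 - d from by omega,
      show m - 1 - d = (m - 2 - d) + 1 from by omega]
    simp only [Nat.sub_self, Nat.choose_zero_right]
    ring
  rw [h1, hT1, hT2]
  have key : ∀ j ∈ range d,
      (-1:ℚ) ^ (j + 1) * ((m - 1 - (j + 1)).choose (d - (j + 1)) : ℚ) *
          ((n - d - 1 + j).choose j : ℚ) * binomQ c' (s - 1 - j)
      = -((-1) ^ j * ((m - 2 - j).choose (d - 1 - j) : ℚ) *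
          ((n - d - 1 + j).choose j : ℚ) * binomQ c' (s - 1 - j)) := by
    intro j hj
    rw [show m - 1 - (j + 1) = m - 2 - j from by omega,
      show d - (j + 1) = d - 1 - j from by omega]
    ring
  rw [Finset.sum_congr rfl key, Finset.sum_neg_distrib]
  ring

lemma Sq_base (d n : ℕ) (hn : d + 1 ≤ n) (s : ℤ) (h1 : 1 ≤ s) (h2 : s ≤ d) :
    Sq d (d + 1) n s = 0 := by
  have h : Sq d (d + 1) n s = Vq (d + 1) (n - d - 1) s := by
    rw [Sq, Vq]
    refine Finset.sum_congr rfl fun j hj => ?_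
    simp only [mem_range] at hj
    rw [show d + 1 - 1 - j = d - j from by omega, Nat.choose_self,
      show d + 1 + n - 2 * d - 1 = (n - d - 1) + 1 from by omega]
    push_cast
    ring
  rw [h]
  exact Vq_zero d (n - d - 1) s h1 (by omega)

lemma Sq_zero (d m n : ℕ) (hm : d + 1 ≤ m) (hn : d + 1 ≤ n)
    (i : ℕ) (hi1 : 1 ≤ i) (hi2 : i ≤ d) : Sq d m n ((m : ℤ) - i) = 0 := by
  have H : ∀ N mm nn, mm + nn ≤ N → d + 1 ≤ mm → d + 1 ≤ nn →
      ∀ ii : ℕ, 1 ≤ ii → ii ≤ d → Sq d mm nn ((mm : ℤ) - ii) = 0 := by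
    intro N
    induction N with
    | zero => intro mm nn h hmm hnn ii _ _; omega
    | succ N ih =>
        intro mm nn hN hmm hnn ii hii1 hii2
        rcases eq_or_lt_of_le hmm with hm1 | hm1
        · rw [← hm1]
          exact Sq_base d nn hnn _ (by omega) (by omega)
        · rcases eq_or_lt_of_le hnn with hn1 | hn1
          · rw [Sq_symm d mm nn (by omega) (by omega), ← hn1,
              show (mm:ℤ) + (d + 1 : ℕ) - d - 1 - ((mm:ℤ) - ii) = (ii:ℤ) from by push_cast; ring,
              Sq_base d mm (by omega) _ (by omega) (by omega), mul_zero]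
          · rw [Sq_rec d mm nn (by omega) (by omega)]
            have e1 : Sq d mm (nn - 1) ((mm:ℤ) - ii) = 0 :=
              ih mm (nn - 1) (by omega) hmm (by omega) ii hii1 hii2
            have e2 : Sq d (mm - 1) nn ((mm:ℤ) - ii - 1) = 0 := by
              have h3 := ih (mm - 1) nn (by omega) (by omega) hnn ii hii1 hii2
              rw [show (mm:ℤ) - ii - 1 = ((mm - 1 : ℕ) : ℤ) - ii from by omega]
              exact h3
            rw [e1, e2, add_zero]
  exact H (m + n) m n le_rfl hm hn i hi1 hi2

/-- The vector `((-1)^j k_j)_j` with `k_j = C(d,j)C(n-d+j-1,j)/C(m-1,j)` lies in the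
kernel of the binomial Hankel matrix `(C(c, m-i-j))_{1≤i≤d, 0≤j≤d}`. -/
theorem kernel_vector (m n d : ℕ) (hd : 0 < d) (hdm : d < m) (hdn : d < n) :
    ∀ i : ℕ, 1 ≤ i → i ≤ d →
      ∑ j ∈ Finset.range (d + 1),
          (-1) ^ j * binomQ (m + n - 2 * d - 1) ((m : ℤ) - j - i) *
            ((d.choose j : ℚ) * ((n - d + j - 1).choose j : ℚ) / ((m - 1).choose j : ℚ)) =
        0 := by
  intro i hi1 hi2
  have key : Sq d m n ((m : ℤ) - i) = 0 := Sq_zero d m n hdm hdn i hi1 hi2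
  have hmd : ((m - 1).choose d : ℚ) ≠ 0 :=
    Nat.cast_ne_zero.mpr (Nat.choose_pos (by omega)).ne'
  have step : ∑ j ∈ Finset.range (d + 1),
      (-1) ^ j * binomQ (m + n - 2 * d - 1) ((m : ℤ) - j - i) *
        ((d.choose j : ℚ) * ((n - d + j - 1).choose j : ℚ) / ((m - 1).choose j : ℚ))
      = (((m - 1).choose d : ℚ))⁻¹ * Sq d m n ((m : ℤ) - i) := by
    rw [Sq, Finset.mul_sum]
    refine Finset.sum_congr rfl fun j hj => ?_
    simp only [mem_range] at hj
    have hj' : j ≤ d := by omega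
    have hmj : ((m - 1).choose j : ℚ) ≠ 0 :=
      Nat.cast_ne_zero.mpr (Nat.choose_pos (by omega)).ne'
    have hid : ((m - 1).choose d : ℚ) * (d.choose j : ℚ)
        = ((m - 1).choose j : ℚ) * (((m - 1 - j).choose (d - j)) : ℚ) := by
      exact_mod_cast congrArg (Nat.cast (R := ℚ))
        (Nat.choose_mul (n := m - 1) hj')
    rw [show (n - d + j - 1) = n - d - 1 + j from by omega,
      show (m:ℤ) - j - i = (m:ℤ) - i - j from by ring]
    field_simp
    linear_combination (((n - d - 1 + j).choose j : ℚ) *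
      binomQ (m + n - 2 * d - 1) ((m:ℤ) - i - j)) * hid
  rw [step, key, mul_zero]
end
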